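/- For |q|<1, 0 < μ < 1, 0 ≤ ν ≤ μ, m, y ∈ ℕ, the weighted sum identity ∑_{j=0}^m φ_{q,μ,ν}(j|m) q^{yj} (μ q^{m-j};q)_y = (μ;q)_y (ν q^m;q)_y / (ν;q)_y holds. -/

import Mathlib

noncomputable def qpR (a q : ℝ) (n : ℕ) : ℝ := ∏ i ∈ Finset.range n, (1 - a * q ^ i)

noncomputable def phi (q μ ν : ℝ) (j m : ℕ) : ℝ :=
  μ ^ j * qpR (ν / μ) q j * qpR μ q (m - j) * qpR q q m
    / (qpR ν q m * qpR q q j * qpR q q (m - j))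

/-- Gaussian binomial coefficient as a polynomial in q, via q-Pascal rule. -/
noncomputable def gb (q : ℝ) : ℕ → ℕ → ℝ
  | 0, 0 => 1
  | 0, _ + 1 => 0
  | m + 1, 0 => gb q m 0
  | m + 1, j + 1 => gb q m (j + 1) + q ^ (m - j) * gb q m j

noncomputable def Pp (a b q : ℝ) (j : ℕ) : ℝ := ∏ i ∈ Finset.range j, (a - b * q ^ i)

lemma qpR_succ (a q : ℝ) (n : ℕ) : qpR a q (n + 1) = qpR a q n * (1 - a * q ^ n) :=
  Finset.prod_range_succ _ _

lemma Pp_succ (a b q : ℝ) (j : ℕ) : Pp a b q (j + 1) = Pp a b q j * (a - b * q ^ j) :=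
  Finset.prod_range_succ _ _

lemma qpR_add (a q : ℝ) (n k : ℕ) : qpR a q (n + k) = qpR a q n * qpR (a * q ^ n) q k := by
  unfold qpR
  rw [Finset.prod_range_add]
  congr 1
  refine Finset.prod_congr rfl fun i _ => ?_
  rw [pow_add]; ring

lemma gb_zero (q : ℝ) : ∀ m, gb q m 0 = 1
  | 0 => rfl
  | m + 1 => by rw [gb]; exact gb_zero q m

lemma gb_gt (q : ℝ) : ∀ m j, m < j → gb q m j = 0
  | 0, j + 1, _ => rfl
  | m + 1, j + 1, h => by
    rw [gb, gb_gt q m (j + 1) (by omega), gb_gt q m j (by omega)]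
    ring

lemma gb_self (q : ℝ) : ∀ m, gb q m m = 1
  | 0 => rfl
  | m + 1 => by
    rw [gb, gb_gt q m (m + 1) (by omega), gb_self q m]; simp

lemma gb_mul (q : ℝ) : ∀ m j, j ≤ m →
    qpR q q j * qpR q q (m - j) * gb q m j = qpR q q m
  | 0, 0, _ => by simp [qpR, gb]
  | m + 1, 0, _ => by simp [qpR, gb_zero]
  | m + 1, j + 1, h => by
    rcases Nat.lt_or_ge (j + 1) (m + 1) with hlt | hge
    · have hj : j + 1 ≤ m := by omega
      have hj' : j ≤ m := by omega
      have e1 : m + 1 - (j + 1) = m - j := by omega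
      have e2 : m - j = (m - (j + 1)) + 1 := by omega
      have ih1 : (qpR q q j * (1 - q * q ^ j)) * qpR q q (m - (j + 1)) * gb q m (j + 1)
          = qpR q q m := by
        rw [← qpR_succ]
        have := gb_mul q m (j + 1) hj
        rwa [show m - (j + 1) = m - (j + 1) from rfl] at this
      have ih2 : qpR q q j * (qpR q q (m - (j + 1)) * (1 - q * q ^ (m - (j + 1)))) * gb q m j
          = qpR q q m := by
        rw [← qpR_succ, ← e2]
        exact gb_mul q m j hj'
      have e7 : q ^ (m - j) = q * q ^ (m - (j + 1)) := by
        rw [e2, pow_succ']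
      have e8 : q ^ m = q ^ j * (q * q ^ (m - (j + 1))) := by
        rw [← pow_succ', ← pow_add]
        congr 1
        omega
      rw [gb, e1, qpR_succ, show qpR q q (m - j) = qpR q q (m - (j + 1)) * (1 - q * q ^ (m - (j + 1))) from by rw [e2, qpR_succ], qpR_succ q q m, e7, e8]
      linear_combination (1 - q * q ^ (m - (j + 1))) * ih1
        + q * q ^ (m - (j + 1)) * (1 - q * q ^ j) * ih2
    · have hm : j = m := by omega
      rw [hm, gb, gb_gt q m (m + 1) (by omega), gb_self, Nat.sub_self, Nat.sub_self, pow_zero]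
      simp [qpR]

lemma key (a b q : ℝ) : ∀ m,
    ∑ j ∈ Finset.range (m + 1), Pp a b q j * qpR a q (m - j) * gb q m j = qpR b q m
  | 0 => by simp [Pp, qpR, gb]
  | m + 1 => by
    have step : ∑ j ∈ Finset.range (m + 2), Pp a b q j * qpR a q (m + 1 - j) * gb q (m+1) j
        = ∑ s ∈ Finset.range (m + 1), Pp a b q (s+1) * qpR a q (m - s) * gb q (m+1) (s+1)
          + Pp a b q 0 * qpR a q (m + 1) * gb q (m+1) 0 := by
      rw [Finset.sum_range_succ']
      simp only [Nat.succ_sub_succ, Nat.sub_zero]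
    have hzero : ∑ j ∈ Finset.range (m + 2), Pp a b q j * qpR a q (m + 1 - j) * gb q m j
        = ∑ j ∈ Finset.range (m + 1), Pp a b q j * qpR a q (m + 1 - j) * gb q m j := by
      rw [Finset.sum_range_succ, gb_gt q m (m+1) (by omega)]
      ring
    have split : ∑ j ∈ Finset.range (m + 2), Pp a b q j * qpR a q (m + 1 - j) * gb q m j
        = ∑ s ∈ Finset.range (m + 1), Pp a b q (s+1) * qpR a q (m - s) * gb q m (s+1)
          + Pp a b q 0 * qpR a q (m + 1) * gb q m 0 := by
      rw [Finset.sum_range_succ']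
      simp only [Nat.succ_sub_succ, Nat.sub_zero]
    calc ∑ j ∈ Finset.range (m + 2), Pp a b q j * qpR a q (m + 1 - j) * gb q (m+1) j
        = ∑ s ∈ Finset.range (m + 1), (Pp a b q (s+1) * qpR a q (m - s) * gb q m (s+1)
            + Pp a b q (s+1) * qpR a q (m - s) * (q ^ (m - s) * gb q m s))
          + Pp a b q 0 * qpR a q (m + 1) * gb q m 0 := by
          rw [step]
          congr 1
          · refine Finset.sum_congr rfl fun s _ => ?_
            rw [show gb q (m+1) (s+1) = gb q m (s+1) + q ^ (m - s) * gb q m s from rfl]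
            ring
      _ = (∑ j ∈ Finset.range (m + 1), Pp a b q j * qpR a q (m + 1 - j) * gb q m j)
          + ∑ s ∈ Finset.range (m + 1), Pp a b q (s+1) * qpR a q (m - s) * (q ^ (m - s) * gb q m s) := by
          rw [Finset.sum_add_distrib, ← hzero, split]
          ring
      _ = ∑ j ∈ Finset.range (m + 1), (1 - b * q ^ m) * (Pp a b q j * qpR a q (m - j) * gb q m j) := by
          rw [← Finset.sum_add_distrib]
          refine Finset.sum_congr rfl fun j hj => ?_
          have hjm : j ≤ m := by simpa [Nat.lt_succ_iff] using hj
          have e1 : m + 1 - j = (m - j) + 1 := by omega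
          have e2 : q ^ j * q ^ (m - j) = q ^ m := by
            rw [← pow_add]; congr 1; omega
          rw [e1, qpR_succ, Pp_succ, ← e2]
          ring
      _ = qpR b q (m + 1) := by
          rw [← Finset.mul_sum, key a b q m, qpR_succ]; ring

example : True := trivial

lemma qpR_pos {a q : ℝ} (ha : |a| < 1) (hq : |q| ≤ 1) (n : ℕ) : 0 < qpR a q n := by
  refine Finset.prod_pos fun i _ => ?_
  have h1 : |q| ^ i ≤ 1 := pow_le_one₀ (abs_nonneg q) hq
  have h2 : a * q ^ i ≤ |a * q ^ i| := le_abs_self _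
  have h3 : |a * q ^ i| ≤ |a| := by
    rw [abs_mul, abs_pow]
    calc |a| * |q| ^ i ≤ |a| * 1 := by
          exact mul_le_mul_of_nonneg_left h1 (abs_nonneg a)
      _ = |a| := mul_one _
  linarith

theorem stmt11 (q μ ν : ℝ) (hq : |q| < 1) (hν : 0 ≤ ν) (hνμ : ν ≤ μ)
    (hμ0 : 0 < μ) (hμ : μ < 1) (m y : ℕ) :
    ∑ j ∈ Finset.range (m + 1),
        phi q μ ν j m * q ^ (y * j) * qpR (μ * q ^ (m - j)) q y
      = qpR μ q y * qpR (ν * q ^ m) q y / qpR ν q y := by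
  have hq1 : |q| ≤ 1 := le_of_lt hq
  have hνabs : |ν| < 1 := by rw [abs_of_nonneg hν]; linarith
  have hqq : ∀ n : ℕ, 0 < qpR q q n := fun n => qpR_pos hq hq1 n
  have hνn : ∀ n : ℕ, 0 < qpR ν q n := fun n => qpR_pos hνabs hq1 n
  have hμne : μ ≠ 0 := ne_of_gt hμ0
  have hterm : ∀ j ∈ Finset.range (m + 1),
      phi q μ ν j m * q ^ (y * j) * qpR (μ * q ^ (m - j)) q y
        = (qpR μ q y / qpR ν q m)
            * (Pp (μ * q ^ y) (ν * q ^ y) q j * qpR (μ * q ^ y) q (m - j) * gb q m j) := by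
    intro j hj
    have hjm : j ≤ m := Nat.lt_succ_iff.mp (Finset.mem_range.mp hj)
    have f1 : μ ^ j * qpR (ν / μ) q j = Pp μ ν q j := by
      unfold qpR Pp
      rw [show μ ^ j = ∏ _i ∈ Finset.range j, μ from by simp, ← Finset.prod_mul_distrib]
      refine Finset.prod_congr rfl fun i _ => ?_
      field_simp
    have f2 : q ^ (y * j) * Pp μ ν q j = Pp (μ * q ^ y) (ν * q ^ y) q j := by
      unfold Pp
      rw [pow_mul, show (q ^ y) ^ j = ∏ _i ∈ Finset.range j, q ^ y from by simp,
        ← Finset.prod_mul_distrib]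
      refine Finset.prod_congr rfl fun i _ => ?_
      ring
    have f3 : qpR μ q (m - j) * qpR (μ * q ^ (m - j)) q y
        = qpR μ q y * qpR (μ * q ^ y) q (m - j) := by
      rw [← qpR_add, ← qpR_add, Nat.add_comm]
    have f5 := gb_mul q m j hjm
    have hphi : phi q μ ν j m
        = Pp μ ν q j * qpR μ q (m - j) * gb q m j / qpR ν q m := by
      rw [phi, ← f1]
      rw [show gb q m j = qpR q q m / (qpR q q j * qpR q q (m - j)) from by
        rw [eq_div_iff (mul_ne_zero (hqq j).ne' (hqq (m - j)).ne')]
        linear_combination f5]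
      field_simp
    rw [hphi]
    rw [div_mul_eq_mul_div, div_mul_eq_mul_div, div_mul_eq_mul_div]
    congr 1
    linear_combination (qpR μ q (m - j) * qpR (μ * q ^ (m - j)) q y * gb q m j) * f2
      + (Pp (μ * q ^ y) (ν * q ^ y) q j * gb q m j) * f3
  rw [Finset.sum_congr rfl hterm, ← Finset.mul_sum, key (μ * q ^ y) (ν * q ^ y) q m]
  have e : qpR ν q y * qpR (ν * q ^ y) q m = qpR ν q m * qpR (ν * q ^ m) q y := by
    rw [← qpR_add, ← qpR_add, Nat.add_comm]
  have h1 := (hνn m).ne'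
  have h2 := (hνn y).ne'
  field_simp
  linear_combination (qpR μ q y) * e
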